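/- Let r ≥ 2 be an integer and let H = (V, E) be an r-uniform hypergraph with N vertices and exactly p·C(N, r) hyperedges, where p = |E|/C(N,r) is its edge density. Let n ≤ N and let S ⊆ V be a uniformly random subset of n distinct vertices. Then for every ε with 0 < ε < p, the probability that e(H[S]) ≤ (p − ε)·C(n, r) is strictly less than exp(−2ε²(n − 2(r−1))/r²). -/

import Mathlib

open Real Finset

private lemma gpos (θ : ℝ) (h0 : 0 ≤ θ) (h1 : θ ≤ 1) (x : ℝ) :
    0 < 1 - θ + θ * Real.exp x := by
  rcases eq_or_lt_of_le h0 with h | h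
  · simp [← h]
  · nlinarith [Real.exp_pos x]

private lemma hoeffding_core (θ : ℝ) (h0 : 0 ≤ θ) (h1 : θ ≤ 1) (h : ℝ) :
    Real.log (1 - θ + θ * Real.exp h) ≤ θ * h + h ^ 2 / 8 := by
  -- F x = log(1-θ+θ e^x) - θ x - x²/8 ; F 0 = 0, F' 0 = 0, F'' ≤ 0.
  set F : ℝ → ℝ := fun x => Real.log (1 - θ + θ * Real.exp x) - θ * x - x ^ 2 / 8 with hF
  set φ : ℝ → ℝ := fun x => θ * Real.exp x / (1 - θ + θ * Real.exp x) - θ - x / 4 with hφ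
  have hgd : ∀ x : ℝ, HasDerivAt (fun y => 1 - θ + θ * Real.exp y) (θ * Real.exp x) x := by
    intro x
    simpa using ((Real.hasDerivAt_exp x).const_mul θ).const_add (1 - θ)
  have hFd : ∀ x : ℝ, HasDerivAt F (φ x) x := by
    intro x
    have h1' : HasDerivAt (fun y => Real.log (1 - θ + θ * Real.exp y))
        (θ * Real.exp x / (1 - θ + θ * Real.exp x)) x :=
      (hgd x).log (ne_of_gt (gpos θ h0 h1 x))
    have h2' : HasDerivAt (fun y : ℝ => θ * y) θ x := by
      simpa using (hasDerivAt_id x).const_mul θ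
    have h3' : HasDerivAt (fun y : ℝ => y ^ 2 / 8) (x / 4) x := by
      have := (hasDerivAt_pow 2 x).div_const 8
      exact this.congr_deriv (by rw [show (2:ℕ) - 1 = 1 from rfl]; push_cast; ring)
    exact (h1'.sub h2').sub h3'
  have hφd : ∀ x : ℝ, HasDerivAt φ
      ((θ * Real.exp x * (1 - θ + θ * Real.exp x) - θ * Real.exp x * (θ * Real.exp x)) /
        (1 - θ + θ * Real.exp x) ^ 2 - 1 / 4) x := by
    intro x
    have hnum : HasDerivAt (fun y => θ * Real.exp y) (θ * Real.exp x) x :=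
      (Real.hasDerivAt_exp x).const_mul θ
    have hq : HasDerivAt (fun y => θ * Real.exp y / (1 - θ + θ * Real.exp y))
        ((θ * Real.exp x * (1 - θ + θ * Real.exp x) - θ * Real.exp x * (θ * Real.exp x)) /
          (1 - θ + θ * Real.exp x) ^ 2) x :=
      hnum.div (hgd x) (ne_of_gt (gpos θ h0 h1 x))
    have hl : HasDerivAt (fun y : ℝ => θ + y / 4) (1 / 4) x := by
      simpa using ((hasDerivAt_id x).div_const 4).const_add θ
    have := hq.sub hl
    have hfun : φ = (fun y => θ * Real.exp y / (1 - θ + θ * Real.exp y)) - fun y => θ + y / 4 := by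
      funext y; simp only [hφ, Pi.sub_apply]; ring
    rw [hfun]; exact this
  have hφ'le : ∀ x : ℝ, deriv φ x ≤ 0 := by
    intro x
    rw [(hφd x).deriv]
    have hg := gpos θ h0 h1 x
    have hu : 0 ≤ θ * Real.exp x := mul_nonneg h0 (Real.exp_pos x).le
    rw [sub_nonpos, div_le_iff₀ (by positivity)]
    nlinarith [sq_nonneg (1 - θ + θ * Real.exp x - 2 * (θ * Real.exp x))]
  have hφanti : Antitone φ := antitone_of_deriv_nonpos
    (fun x => (hφd x).differentiableAt) hφ'le
  have hφ0 : φ 0 = 0 := by simp [hφ]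
  have hF0 : F 0 = 0 := by simp [hF]
  have key : F h ≤ 0 := by
    rcases le_total 0 h with hh | hh
    · have : AntitoneOn F (Set.Ici 0) := by
        apply antitoneOn_of_deriv_nonpos (convex_Ici 0)
          (fun x _ => (hFd x).differentiableAt.continuousAt.continuousWithinAt)
          (fun x _ => (hFd x).differentiableAt.differentiableWithinAt)
        intro x hx
        rw [(hFd x).deriv]
        rw [interior_Ici] at hx
        have := hφanti (le_of_lt hx)
        rw [hφ0] at this
        exact this
      have := this (Set.self_mem_Ici) (Set.mem_Ici.2 hh) hh
      rwa [hF0] at this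
    · have : MonotoneOn F (Set.Iic 0) := by
        apply monotoneOn_of_deriv_nonneg (convex_Iic 0)
          (fun x _ => (hFd x).differentiableAt.continuousAt.continuousWithinAt)
          (fun x _ => (hFd x).differentiableAt.differentiableWithinAt)
        intro x hx
        rw [(hFd x).deriv]
        rw [interior_Iic] at hx
        have := hφanti (le_of_lt hx)
        rw [hφ0] at this
        exact this
      have := this (Set.mem_Iic.2 hh) (Set.self_mem_Iic) hh
      rwa [hF0] at this
  have := key
  simp only [hF] at this
  linarith

private lemma exp_le_chord {a b x : ℝ} (hab : a < b) (hx : a ≤ x) (hxb : x ≤ b) :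
    Real.exp x ≤ ((b - x) * Real.exp a + (x - a) * Real.exp b) / (b - a) := by
  have hba : (0:ℝ) < b - a := by linarith
  have hs : (0:ℝ) ≤ (b - x) / (b - a) := div_nonneg (by linarith) (by linarith)
  have ht : (0:ℝ) ≤ (x - a) / (b - a) := div_nonneg (by linarith) (by linarith)
  have hst : (b - x) / (b - a) + (x - a) / (b - a) = 1 := by field_simp; ring
  have := convexOn_exp.2 (Set.mem_univ a) (Set.mem_univ b) hs ht hst
  simp only [smul_eq_mul] at this
  have hxeq : (b - x) / (b - a) * a + (x - a) / (b - a) * b = x := by field_simp; ring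
  rw [hxeq] at this
  calc Real.exp x ≤ (b - x) / (b - a) * Real.exp a + (x - a) / (b - a) * Real.exp b := this
    _ = ((b - x) * Real.exp a + (x - a) * Real.exp b) / (b - a) := by ring

/-- Hoeffding bound for a finite uniform average: if all values lie within distance `C`
of each other, the average of `exp` is at most `exp (average + C²/8)`. -/
private lemma hoeffding_avg {ι : Type*} [DecidableEq ι] (s : Finset ι) (hs : s.Nonempty)
    (y : ι → ℝ) (C : ℝ) (hy : ∀ u ∈ s, ∀ v ∈ s, y u - y v ≤ C) :
    (∑ v ∈ s, Real.exp (y v)) / s.card ≤ Real.exp ((∑ v ∈ s, y v) / s.card + C ^ 2 / 8) := by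
  have hcard : (0:ℝ) < s.card := by exact_mod_cast Finset.card_pos.mpr hs
  obtain ⟨u₀, hu₀, hmax⟩ := s.exists_max_image y hs
  obtain ⟨v₀, hv₀, hmin⟩ := s.exists_min_image y hs
  set a := y v₀ with ha
  set b := y u₀ with hb
  have hab : a ≤ b := hmin u₀ hu₀
  have hba : b - a ≤ C := hy u₀ hu₀ v₀ hv₀
  have hC : 0 ≤ C := le_trans (by linarith) hba
  set μ := (∑ v ∈ s, y v) / s.card with hμ
  clear_value a b μ
  have hμa : a ≤ μ := by
    rw [hμ, le_div_iff₀ hcard]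
    calc a * s.card = ∑ _v ∈ s, a := by rw [Finset.sum_const]; ring
      _ ≤ ∑ v ∈ s, y v := Finset.sum_le_sum fun v hv => hmin v hv
  have hμb : μ ≤ b := by
    rw [hμ, div_le_iff₀ hcard]
    calc (∑ v ∈ s, y v) ≤ ∑ _v ∈ s, b := Finset.sum_le_sum fun v hv => hmax v hv
      _ = b * s.card := by rw [Finset.sum_const]; ring
  rcases eq_or_lt_of_le hab with heq | hlt
  · -- all values equal to a
    have hall : ∀ v ∈ s, y v = a := fun v hv => le_antisymm (heq ▸ hmax v hv) (hmin v hv)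
    have h1 : (∑ v ∈ s, Real.exp (y v)) = s.card * Real.exp a := by
      rw [Finset.sum_congr rfl fun v hv => by rw [hall v hv]]; simp [mul_comm]
    have h2 : μ = a := by
      rw [hμ, Finset.sum_congr rfl fun v hv => hall v hv]
      simp
      exact mul_div_cancel_left₀ _ (ne_of_gt hcard)
    rw [h1, h2, mul_comm, mul_div_assoc, div_self (ne_of_gt hcard), mul_one]
    exact Real.exp_le_exp.2 (by nlinarith [sq_nonneg C])
  · -- a < b : chord bound + core lemma
    have key : (∑ v ∈ s, Real.exp (y v)) / s.card
        ≤ ((b - μ) * Real.exp a + (μ - a) * Real.exp b) / (b - a) := by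
      rw [div_le_div_iff₀ hcard (by linarith)]
      have hsum : ∑ v ∈ s, Real.exp (y v)
          ≤ ∑ v ∈ s, ((b - y v) * Real.exp a + (y v - a) * Real.exp b) / (b - a) :=
        Finset.sum_le_sum fun v hv => exp_le_chord hlt (hmin v hv) (hmax v hv)
      have hsum2 : ∑ v ∈ s, ((b - y v) * Real.exp a + (y v - a) * Real.exp b) / (b - a)
          = ((b * s.card - ∑ v ∈ s, y v) * Real.exp a
              + ((∑ v ∈ s, y v) - a * s.card) * Real.exp b) / (b - a) := by
        rw [← Finset.sum_div]
        congr 1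
        rw [Finset.sum_add_distrib, ← Finset.sum_mul, ← Finset.sum_mul]
        congr 2 <;> rw [Finset.sum_sub_distrib] <;> simp [mul_comm]
      have hμs : (∑ v ∈ s, y v) = μ * s.card := by
        rw [hμ]; field_simp
      calc (∑ v ∈ s, Real.exp (y v)) * (b - a)
          ≤ (((b * s.card - ∑ v ∈ s, y v) * Real.exp a
              + ((∑ v ∈ s, y v) - a * s.card) * Real.exp b) / (b - a)) * (b - a) := by
            apply mul_le_mul_of_nonneg_right _ (by linarith)
            rw [← hsum2]; exact hsum
        _ = ((b - μ) * Real.exp a + (μ - a) * Real.exp b) * s.card := by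
            rw [div_mul_cancel₀ _ (by linarith : b - a ≠ 0), hμs]; ring
    refine le_trans key ?_
    -- now apply the core lemma with θ = (μ-a)/(b-a), h = b-a
    set θ := (μ - a) / (b - a) with hθ
    have hθ0 : 0 ≤ θ := by apply div_nonneg <;> linarith
    have hθ1 : θ ≤ 1 := by rw [hθ, div_le_one (by linarith)]; linarith
    have hcore := hoeffding_core θ hθ0 hθ1 (b - a)
    have hpos := gpos θ hθ0 hθ1 (b - a)
    have hexp : 1 - θ + θ * Real.exp (b - a) ≤ Real.exp (θ * (b - a) + (b - a) ^ 2 / 8) := by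
      rw [← Real.exp_log hpos]
      exact Real.exp_le_exp.2 hcore
    have hb' : Real.exp b = Real.exp a * Real.exp (b - a) := by
      rw [← Real.exp_add]; ring_nf
    have hrw : ((b - μ) * Real.exp a + (μ - a) * Real.exp b) / (b - a)
        = Real.exp a * (1 - θ + θ * Real.exp (b - a)) := by
      rw [hθ, hb']
      have hba0 : b - a ≠ 0 := ne_of_gt (by linarith)
      field_simp
      ring
    rw [hrw]
    have hθh : θ * (b - a) = μ - a := by
      rw [hθ, div_mul_cancel₀ _ (ne_of_gt (by linarith : (0:ℝ) < b - a))]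
    calc Real.exp a * (1 - θ + θ * Real.exp (b - a))
        ≤ Real.exp a * Real.exp (θ * (b - a) + (b - a) ^ 2 / 8) :=
          mul_le_mul_of_nonneg_left hexp (Real.exp_pos a).le
      _ = Real.exp (a + (θ * (b - a) + (b - a) ^ 2 / 8)) := by rw [← Real.exp_add]
      _ ≤ Real.exp (μ + C ^ 2 / 8) := by
          apply Real.exp_le_exp.2
          rw [hθh]
          have : (b - a) ^ 2 ≤ C ^ 2 := by nlinarith
          linarith

variable {V : Type} [Fintype V] [DecidableEq V]

/-- The `n`-element subsets of `V` containing `T`. -/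
private def extF (n : ℕ) (T : Finset V) : Finset (Finset V) :=
  (Finset.powersetCard n (Finset.univ : Finset V)).filter (fun S => T ⊆ S)

private lemma mem_ext {n : ℕ} {T S : Finset V} : S ∈ extF n T ↔ S.card = n ∧ T ⊆ S := by
  unfold extF
  rw [Finset.mem_filter, Finset.mem_powersetCard]
  constructor
  · rintro ⟨⟨-, hc⟩, hs⟩; exact ⟨hc, hs⟩
  · rintro ⟨hc, hs⟩; exact ⟨⟨Finset.subset_univ _, hc⟩, hs⟩

private lemma card_ext {n : ℕ} {T : Finset V} (hT : T.card ≤ n) (hn : n ≤ Fintype.card V) :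
    (extF n T).card = (Fintype.card V - T.card).choose (n - T.card) := by
  classical
  have himg : extF n T = (Tᶜ.powersetCard (n - T.card)).image (fun S' => S' ∪ T) := by
    ext S
    simp only [mem_ext, Finset.mem_image, Finset.mem_powersetCard]
    constructor
    · rintro ⟨hcard, hsub⟩
      refine ⟨S \ T, ⟨fun x hx => ?_, ?_⟩, Finset.sdiff_union_of_subset hsub⟩
      · rw [Finset.mem_compl]; exact (Finset.mem_sdiff.1 hx).2
      · rw [Finset.card_sdiff_of_subset hsub, hcard]
    · rintro ⟨S', ⟨hsub', hcard'⟩, rfl⟩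
      have hdisj : Disjoint S' T := by
        rw [Finset.disjoint_left]
        intro x hx hxT
        exact (Finset.mem_compl.1 (hsub' hx)) hxT
      constructor
      · rw [Finset.card_union_of_disjoint hdisj, hcard']
        omega
      · exact Finset.subset_union_right
  rw [himg, Finset.card_image_of_injOn, Finset.card_powersetCard, Finset.card_compl]
  intro S₁ h₁ S₂ h₂ heq
  rw [Finset.mem_coe, Finset.mem_powersetCard] at h₁ h₂
  have e₁ : S₁ = (S₁ ∪ T) \ T := by
    rw [Finset.union_sdiff_right]
    exact (Finset.sdiff_eq_self_of_disjoint (Finset.disjoint_left.2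
      (fun x hx hxT => (Finset.mem_compl.1 (h₁.1 hx)) hxT))).symm
  have e₂ : S₂ = (S₂ ∪ T) \ T := by
    rw [Finset.union_sdiff_right]
    exact (Finset.sdiff_eq_self_of_disjoint (Finset.disjoint_left.2
      (fun x hx hxT => (Finset.mem_compl.1 (h₂.1 hx)) hxT))).symm
  have heq' : S₁ ∪ T = S₂ ∪ T := heq
  rw [e₁, e₂, heq']

private lemma ext_self {n : ℕ} {T : Finset V} (hT : T.card = n) : extF n T = {T} := by
  ext S
  simp only [mem_ext, Finset.mem_singleton]
  constructor
  · rintro ⟨hcard, hsub⟩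
    exact (Finset.eq_of_subset_of_card_le hsub (by omega)).symm
  · rintro rfl; exact ⟨hT, Finset.Subset.refl _⟩

private lemma ext_insert {n : ℕ} {T : Finset V} {v : V} (hv : v ∉ T) :
    extF n (insert v T) = (extF n T).filter (fun S => v ∈ S) := by
  ext S
  simp only [mem_ext, Finset.mem_filter, Finset.insert_subset_iff]
  tauto

/-- Double counting. -/
private lemma sum_ext_insert {n : ℕ} {T : Finset V} (hT : T.card ≤ n) (h : Finset V → ℝ) :
    ∑ v ∈ Tᶜ, ∑ S ∈ extF n (insert v T), h S = ((n : ℝ) - T.card) * ∑ S ∈ extF n T, h S := by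
  have step1 : ∀ v ∈ Tᶜ, ∑ S ∈ extF n (insert v T), h S
      = ∑ S ∈ extF n T, (if v ∈ S then h S else 0) := by
    intro v hv
    rw [ext_insert (Finset.mem_compl.1 hv), Finset.sum_filter]
  rw [Finset.sum_congr rfl step1, Finset.sum_comm]
  have step2 : ∀ S ∈ extF n T, (∑ v ∈ Tᶜ, if v ∈ S then h S else 0)
      = ((n : ℝ) - T.card) * h S := by
    intro S hS
    obtain ⟨hcard, hsub⟩ := mem_ext.1 hS
    rw [← Finset.sum_filter]
    have hfT : Tᶜ.filter (fun v => v ∈ S) = S \ T := by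
      ext v
      simp only [Finset.mem_filter, Finset.mem_compl, Finset.mem_sdiff]
      tauto
    rw [hfT, Finset.sum_const, Finset.card_sdiff_of_subset hsub, hcard, nsmul_eq_mul]
    congr 1
    rw [Nat.cast_sub hT]
  rw [Finset.sum_congr rfl step2, ← Finset.mul_sum]

/-- The average of `h` over the `n`-sets containing `T`. -/
private noncomputable def avgOn (n : ℕ) (h : Finset V → ℝ) (T : Finset V) : ℝ :=
  (∑ S ∈ extF n T, h S) / ((Fintype.card V - T.card).choose (n - T.card))

private lemma avgOn_self {n : ℕ} (h : Finset V → ℝ) {T : Finset V} (hT : T.card = n) :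
    avgOn n h T = h T := by
  rw [avgOn, ext_self hT, Finset.sum_singleton, hT, Nat.sub_self, Nat.choose_zero_right]
  simp

/-- Recursion: the sum over next vertices of the conditional averages. -/
private lemma sum_avgOn_insert {n : ℕ} {T : Finset V} (hT : T.card < n)
    (hn : n ≤ Fintype.card V) (h : Finset V → ℝ) :
    ∑ v ∈ Tᶜ, avgOn n h (insert v T)
      = ((Fintype.card V : ℝ) - T.card) * avgOn n h T := by
  classical
  set N := Fintype.card V with hN
  set i := T.card with hi
  have hiN : i < N := lt_of_lt_of_le hT hn
  have hd : ∀ v ∈ Tᶜ, avgOn n h (insert v T)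
      = (∑ S ∈ extF n (insert v T), h S) / ((N - (i+1)).choose (n - (i+1))) := by
    intro v hv
    rw [avgOn, Finset.card_insert_of_notMem (Finset.mem_compl.1 hv), ← hi]
  rw [Finset.sum_congr rfl hd, ← Finset.sum_div, sum_ext_insert (le_of_lt hT) h]
  rw [avgOn, ← hi, ← hN]
  have hkey : (n - i) * ((N - i).choose (n - i)) = (N - i) * ((N - (i+1)).choose (n - (i+1))) := by
    have h1 := Nat.add_one_mul_choose_eq (N - (i+1)) (n - (i+1))
    have e1 : (N - (i+1)) + 1 = N - i := by omega
    have e2 : (n - (i+1)) + 1 = n - i := by omega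
    rw [e1, e2] at h1
    rw [h1]
    exact Nat.mul_comm _ _
  have hc1 : (0:ℝ) < ((N - (i+1)).choose (n - (i+1)) : ℝ) := by
    exact_mod_cast Nat.choose_pos (by omega)
  have hc2 : (0:ℝ) < ((N - i).choose (n - i) : ℝ) := by
    exact_mod_cast Nat.choose_pos (by omega)
  have hin : i ≤ n := le_of_lt hT
  have hiN' : i ≤ N := le_of_lt hiN
  have hkeyR : ((n:ℝ) - i) * (((N - i).choose (n - i) : ℕ) : ℝ)
      = ((N:ℝ) - i) * (((N - (i+1)).choose (n - (i+1)) : ℕ) : ℝ) := by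
    have h2 := congrArg (Nat.cast : ℕ → ℝ) hkey
    push_cast [Nat.cast_sub hin, Nat.cast_sub hiN'] at h2
    exact h2
  field_simp
  linear_combination (∑ S ∈ extF n T, h S) * hkeyR

section Hyper

variable (E : Finset (Finset V)) (r n : ℕ)

/-- Number of edges inside `S`, as a real. -/
private noncomputable def edens (S : Finset V) : ℝ :=
  ((E.filter (· ⊆ S)).card : ℝ) / (n.choose r : ℝ)

private lemma count_split (hE : ∀ e ∈ E, e.card = r) {S : Finset V} {a : V} (ha : a ∈ S) :
    (E.filter (· ⊆ S.erase a)).card ≤ (E.filter (· ⊆ S)).card ∧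
    (E.filter (· ⊆ S)).card ≤ (E.filter (· ⊆ S.erase a)).card + (S.card - 1).choose (r - 1) := by
  classical
  constructor
  · apply Finset.card_le_card
    exact Finset.monotone_filter_right E (fun e _ he => he.trans (Finset.erase_subset a S))
  · have hsplit := Finset.card_filter_add_card_filter_not
      (s := E.filter (· ⊆ S)) (p := fun e => a ∈ e)
    have h1 : (E.filter (· ⊆ S)).filter (fun e => ¬ a ∈ e) = E.filter (· ⊆ S.erase a) := by
      rw [Finset.filter_filter]
      ext e
      simp only [Finset.mem_filter, Finset.subset_erase]
    have h2 : ((E.filter (· ⊆ S)).filter (fun e => a ∈ e)).card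
        ≤ (S.card - 1).choose (r - 1) := by
      have := Finset.card_le_card_of_injOn
        (s := (E.filter (· ⊆ S)).filter (fun e => a ∈ e))
        (f := fun e => Finset.erase e a)
        (t := (S.erase a).powersetCard (r - 1)) ?_ ?_
      · rwa [Finset.card_powersetCard, Finset.card_erase_of_mem ha] at this
      · intro e he
        rw [Finset.mem_coe, Finset.mem_filter, Finset.mem_filter] at he
        obtain ⟨⟨heE, heS⟩, hae⟩ := he
        rw [Finset.mem_coe, Finset.mem_powersetCard]
        exact ⟨Finset.erase_subset_erase a heS,
          by rw [Finset.card_erase_of_mem hae, hE e heE]⟩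
      · intro e₁ h₁ e₂ h₂ heq
        simp only [Finset.coe_filter, Set.mem_setOf_eq, Finset.mem_filter] at h₁ h₂
        have heq' : e₁.erase a = e₂.erase a := heq
        rw [← Finset.insert_erase h₁.2, ← Finset.insert_erase h₂.2, heq']
    rw [← hsplit, h1]
    omega

private lemma dens_dist (hE : ∀ e ∈ E, e.card = r) (hr : 1 ≤ r) (hrn : r ≤ n)
    {S : Finset V} (hS : S.card = n) {a b : V} (ha : a ∈ S) (hb : b ∉ S) :
    |edens E r n S - edens E r n (insert b (S.erase a))| ≤
      (((n - 1).choose (r - 1) : ℕ) : ℝ) / (n.choose r : ℝ) := by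
  classical
  set S' := insert b (S.erase a) with hS'
  have hbe : b ∉ S.erase a := fun h => hb (Finset.erase_subset a S h)
  have hS'c : S'.card = n := by
    rw [hS', Finset.card_insert_of_notMem hbe, Finset.card_erase_of_mem ha, hS]
    omega
  have hbS' : b ∈ S' := Finset.mem_insert_self b _
  have hS'e : S'.erase b = S.erase a := by
    rw [hS', Finset.erase_insert hbe]
  have h1 := count_split E r hE ha
  have h2 := count_split E r hE hbS'
  rw [hS'e, hS'c] at h2
  rw [hS] at h1
  have hc : (0:ℝ) < (n.choose r : ℝ) := by exact_mod_cast Nat.choose_pos hrn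
  unfold edens
  rw [div_sub_div_same, abs_div, abs_of_nonneg hc.le, div_le_div_iff_of_pos_right hc]
  have hA : (E.filter (· ⊆ S)).card ≤ (E.filter (· ⊆ S')).card + (n - 1).choose (r - 1) := by
    omega
  have hB : (E.filter (· ⊆ S')).card ≤ (E.filter (· ⊆ S)).card + (n - 1).choose (r - 1) := by
    omega
  rw [abs_sub_le_iff]
  constructor
  · have := (Nat.cast_le (α := ℝ)).2 hA
    push_cast at this
    linarith
  · have := (Nat.cast_le (α := ℝ)).2 hB
    push_cast at this
    linarith

private lemma avgOn_swap (hE : ∀ e ∈ E, e.card = r) (hr : 1 ≤ r) (hrn : r ≤ n)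
    {T : Finset V} (hT : T.card < n) (hn : n ≤ Fintype.card V)
    {a b : V} (ha : a ∈ Tᶜ) (hb : b ∈ Tᶜ) :
    avgOn n (edens E r n) (insert a T) - avgOn n (edens E r n) (insert b T) ≤
      (((n - 1).choose (r - 1) : ℕ) : ℝ) / (n.choose r : ℝ) := by
  classical
  have hcnr : (0:ℝ) < (n.choose r : ℝ) := by exact_mod_cast Nat.choose_pos hrn
  have hcpos : (0:ℝ) ≤ (((n - 1).choose (r - 1) : ℕ) : ℝ) / (n.choose r : ℝ) := by positivity
  rcases eq_or_ne a b with rfl | hab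
  · simpa using hcpos
  have haT : a ∉ T := Finset.mem_compl.1 ha
  have hbT : b ∉ T := Finset.mem_compl.1 hb
  have hcardIa : (insert a T).card = T.card + 1 := Finset.card_insert_of_notMem haT
  have hcardIb : (insert b T).card = T.card + 1 := Finset.card_insert_of_notMem hbT
  set Φ : Finset V → Finset V := fun S => if b ∈ S then S else insert b (S.erase a) with hΦ
  set Ψ : Finset V → Finset V := fun S => if a ∈ S then S else insert a (S.erase b) with hΨ
  have hmem : ∀ (x y : V), x ∈ Tᶜ → y ∈ Tᶜ → x ≠ y →
      ∀ S ∈ extF n (insert x T), (if y ∈ S then S else insert y (S.erase x)) ∈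
        extF n (insert y T) := by
    intro x y hx hy hxy S hS
    obtain ⟨hScard, hSsub⟩ := mem_ext.1 hS
    have hxS : x ∈ S := hSsub (Finset.mem_insert_self x T)
    have hTS : T ⊆ S := fun u hu => hSsub (Finset.mem_insert_of_mem hu)
    by_cases hyS : y ∈ S
    · rw [if_pos hyS]
      exact mem_ext.2 ⟨hScard, Finset.insert_subset hyS hTS⟩
    · rw [if_neg hyS]
      have hyex : y ∉ S.erase x := fun h => hyS (Finset.erase_subset x S h)
      refine mem_ext.2 ⟨?_, ?_⟩
      · rw [Finset.card_insert_of_notMem hyex, Finset.card_erase_of_mem hxS, hScard]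
        omega
      · apply Finset.insert_subset (Finset.mem_insert_self y _)
        intro u hu
        apply Finset.mem_insert_of_mem
        rw [Finset.mem_erase]
        exact ⟨fun h => (Finset.mem_compl.1 hx) (h ▸ hu), hTS hu⟩
  have hinv : ∀ (x y : V), x ∈ Tᶜ → y ∈ Tᶜ → x ≠ y →
      ∀ S ∈ extF n (insert x T),
        (if x ∈ (if y ∈ S then S else insert y (S.erase x)) then
          (if y ∈ S then S else insert y (S.erase x))
        else insert x ((if y ∈ S then S else insert y (S.erase x)).erase y)) = S := by
    intro x y hx hy hxy S hS
    obtain ⟨hScard, hSsub⟩ := mem_ext.1 hS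
    have hxS : x ∈ S := hSsub (Finset.mem_insert_self x T)
    by_cases hyS : y ∈ S
    · rw [if_pos hyS, if_pos hxS]
    · rw [if_neg hyS]
      have hxe : x ∉ insert y (S.erase x) := by
        rw [Finset.mem_insert]
        push_neg
        exact ⟨hxy, Finset.notMem_erase x S⟩
      rw [if_neg hxe]
      have hyse : y ∉ S.erase x := fun h => hyS (Finset.erase_subset x S h)
      rw [Finset.erase_insert hyse, Finset.insert_erase hxS]
  -- rewrite the second average as a sum over the first index set
  have hsum : ∑ S ∈ extF n (insert b T), edens E r n S
      = ∑ S ∈ extF n (insert a T), edens E r n (Φ S) := by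
    refine Finset.sum_nbij' Ψ Φ ?_ ?_ ?_ ?_ ?_
    · exact fun S hS => hmem b a hb ha hab.symm S hS
    · exact fun S hS => hmem a b ha hb hab S hS
    · exact fun S hS => hinv b a hb ha hab.symm S hS
    · exact fun S hS => hinv a b ha hb hab S hS
    · intro S hS
      exact congrArg (edens E r n) (hinv b a hb ha hab.symm S hS).symm
  have hpt : ∀ S ∈ extF n (insert a T), edens E r n S - edens E r n (Φ S)
      ≤ (((n - 1).choose (r - 1) : ℕ) : ℝ) / (n.choose r : ℝ) := by
    intro S hS
    obtain ⟨hScard, hSsub⟩ := mem_ext.1 hS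
    have haS : a ∈ S := hSsub (Finset.mem_insert_self a T)
    by_cases hbS : b ∈ S
    · rw [hΦ]
      simp only [if_pos hbS, sub_self]
      exact hcpos
    · rw [hΦ]
      simp only [if_neg hbS]
      have := dens_dist E r n hE hr hrn hScard haS hbS
      have h1 := abs_le.1 this
      linarith [h1.1, h1.2]
  -- put it together
  rw [avgOn, avgOn, hcardIa, hcardIb, hsum, div_sub_div_same, ← Finset.sum_sub_distrib]
  have hD : (0:ℝ) < (((Fintype.card V - (T.card + 1)).choose (n - (T.card + 1)) : ℕ) : ℝ) := by
    have : T.card + 1 ≤ n := hT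
    exact_mod_cast Nat.choose_pos (by omega)
  rw [div_le_iff₀ hD]
  calc ∑ S ∈ extF n (insert a T), (edens E r n S - edens E r n (Φ S))
      ≤ ∑ _S ∈ extF n (insert a T), (((n - 1).choose (r - 1) : ℕ) : ℝ) / (n.choose r : ℝ) :=
        Finset.sum_le_sum hpt
    _ = (extF n (insert a T)).card * ((((n - 1).choose (r - 1) : ℕ) : ℝ) / (n.choose r : ℝ)) := by
        rw [Finset.sum_const, nsmul_eq_mul]
    _ = (((n - 1).choose (r - 1) : ℕ) : ℝ) / (n.choose r : ℝ)
          * (((Fintype.card V - (T.card + 1)).choose (n - (T.card + 1)) : ℕ) : ℝ) := by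
        rw [card_ext (by omega : (insert a T).card ≤ n) hn, hcardIa]
        ring

private lemma choose_identity {r n N : ℕ} (hrn : r ≤ n) (hn : n ≤ N) :
    N.choose n * n.choose r = N.choose r * (N - r).choose (n - r) := by
  have hrN : r ≤ N := le_trans hrn hn
  have key : N.choose n * n.choose r * (r.factorial * (n - r).factorial * (N - n).factorial)
      = N.choose r * (N - r).choose (n - r)
          * (r.factorial * (n - r).factorial * (N - n).factorial) := by
    have h1 : N.choose n * n.choose r * (r.factorial * (n - r).factorial * (N - n).factorial)
        = N.choose n * (n.choose r * r.factorial * (n - r).factorial) * (N - n).factorial := by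
      ring
    rw [h1, Nat.choose_mul_factorial_mul_factorial hrn,
      show N.choose n * n.factorial * (N - n).factorial
        = N.choose n * n.factorial * (N - n).factorial from rfl]
    rw [Nat.choose_mul_factorial_mul_factorial hn]
    have h2 : N.choose r * (N - r).choose (n - r)
          * (r.factorial * (n - r).factorial * (N - n).factorial)
        = N.choose r * r.factorial
          * ((N - r).choose (n - r) * (n - r).factorial * (N - n).factorial) := by
      ring
    rw [h2]
    have hNn : N - n = (N - r) - (n - r) := by omega
    rw [hNn, Nat.choose_mul_factorial_mul_factorial (by omega : n - r ≤ N - r)]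
    have h3 : N.choose r * r.factorial * (N - r).factorial
        = N.choose r * r.factorial * (N - r).factorial := rfl
    rw [show N.choose r * r.factorial * (N - r).factorial
      = N.choose r * r.factorial * (N - r).factorial from rfl]
    have := Nat.choose_mul_factorial_mul_factorial hrN
    calc N.factorial = N.choose r * r.factorial * (N - r).factorial := this.symm
      _ = N.choose r * r.factorial * (N - r).factorial := rfl
  exact Nat.eq_of_mul_eq_mul_right (by positivity) key

private lemma avgOn_edens_empty (hE : ∀ e ∈ E, e.card = r) (hrn : r ≤ n)
    (hn : n ≤ Fintype.card V) :
    avgOn n (edens E r n) (∅ : Finset V)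
      = (E.card : ℝ) / (((Fintype.card V).choose r : ℕ) : ℝ) := by
  classical
  set N := Fintype.card V with hN
  have hsum : ∑ S ∈ extF n (∅ : Finset V), ((E.filter (· ⊆ S)).card : ℕ)
      = E.card * (N - r).choose (n - r) := by
    have h1 : ∀ S, (E.filter (· ⊆ S)).card = ∑ e ∈ E, if e ⊆ S then 1 else 0 := by
      intro S
      rw [Finset.card_filter]
    rw [Finset.sum_congr rfl (fun S _ => h1 S), Finset.sum_comm]
    have h2 : ∀ e ∈ E, (∑ S ∈ extF n (∅ : Finset V), if e ⊆ S then 1 else 0)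
        = (N - r).choose (n - r) := by
      intro e he
      rw [← Finset.sum_filter]
      have heq : (extF n (∅ : Finset V)).filter (fun S => e ⊆ S) = extF n e := by
        ext S
        simp only [Finset.mem_filter, mem_ext, Finset.empty_subset, and_true]
      rw [heq, Finset.sum_const, smul_eq_mul, mul_one,
        card_ext (by rw [hE e he]; exact hrn) hn, hE e he]
    rw [Finset.sum_congr rfl h2, Finset.sum_const, smul_eq_mul]
  have hid := choose_identity hrn hn
  have hC1 : (0:ℝ) < ((n.choose r : ℕ) : ℝ) := by exact_mod_cast Nat.choose_pos hrn
  have hC2 : (0:ℝ) < ((N.choose n : ℕ) : ℝ) := by exact_mod_cast Nat.choose_pos hn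
  have hC3 : (0:ℝ) < ((N.choose r : ℕ) : ℝ) := by
    exact_mod_cast Nat.choose_pos (le_trans hrn hn)
  rw [avgOn]
  simp only [Finset.card_empty, Nat.sub_zero]
  unfold edens
  rw [← Finset.sum_div]
  have hcast : (∑ S ∈ extF n (∅ : Finset V), ((E.filter (· ⊆ S)).card : ℝ))
      = ((E.card * (N - r).choose (n - r) : ℕ) : ℝ) := by
    rw [← hsum]
    push_cast
    rfl
  rw [hcast]
  have hidR : ((N.choose n : ℕ) : ℝ) * ((n.choose r : ℕ) : ℝ)
      = ((N.choose r : ℕ) : ℝ) * (((N - r).choose (n - r) : ℕ) : ℝ) := by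
    exact_mod_cast congrArg (Nat.cast : ℕ → ℝ) hid
  push_cast
  rw [div_div, div_eq_div_iff (by positivity) (ne_of_gt hC3)]
  push_cast at hidR
  nlinarith [hidR]


private lemma main_ind (hE : ∀ e ∈ E, e.card = r) (hr : 1 ≤ r) (hrn : r ≤ n)
    (hn : n ≤ Fintype.card V) (t : ℝ) (ht : 0 ≤ t) :
    ∀ j : ℕ, j ≤ n → ∀ T : Finset V, T.card = n - j →
      avgOn n (fun S => Real.exp (-t * edens E r n S)) T
        ≤ Real.exp (-t * avgOn n (edens E r n) T
            + j * (t ^ 2 * ((((n - 1).choose (r - 1) : ℕ) : ℝ) / (n.choose r : ℝ)) ^ 2 / 8)) := by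
  classical
  set c : ℝ := (((n - 1).choose (r - 1) : ℕ) : ℝ) / (n.choose r : ℝ) with hc
  have hc0 : 0 ≤ c := by positivity
  intro j
  induction j with
  | zero =>
    intro _ T hT
    rw [Nat.sub_zero] at hT
    rw [avgOn_self _ hT, avgOn_self _ hT]
    simp
  | succ k ih =>
    intro hk T hT
    set N := Fintype.card V with hN
    have hTn : T.card < n := by omega
    have hiN : T.card < N := lt_of_lt_of_le hTn hn
    have hcompl : (Tᶜ : Finset V).card = N - T.card := by
      rw [Finset.card_compl, hN]
    have hcomplR : ((Tᶜ : Finset V).card : ℝ) = (N : ℝ) - T.card := by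
      rw [hcompl, Nat.cast_sub (le_of_lt hiN)]
    have hcpos : (0:ℝ) < (N : ℝ) - T.card := by
      have : (T.card : ℝ) < (N : ℝ) := by exact_mod_cast hiN
      linarith
    have hne : (Tᶜ : Finset V).Nonempty := by
      rw [← Finset.card_pos, hcompl]
      omega
    -- the average recursions
    have recg := sum_avgOn_insert hTn hn (fun S => Real.exp (-t * edens E r n S))
    have recd := sum_avgOn_insert hTn hn (edens E r n)
    -- rewrite goal LHS
    have hLHS : avgOn n (fun S => Real.exp (-t * edens E r n S)) T
        = (∑ v ∈ Tᶜ, avgOn n (fun S => Real.exp (-t * edens E r n S)) (insert v T))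
            / ((Tᶜ : Finset V).card) := by
      rw [recg, ← hN, hcomplR]
      field_simp
    rw [hLHS]
    -- apply induction hypothesis pointwise
    set K := t ^ 2 * c ^ 2 / 8 with hK
    have hK0 : 0 ≤ K := by positivity
    have hstep1 : ∀ v ∈ (Tᶜ : Finset V),
        avgOn n (fun S => Real.exp (-t * edens E r n S)) (insert v T)
          ≤ Real.exp (-t * avgOn n (edens E r n) (insert v T) + k * K) := by
      intro v hv
      apply ih (by omega)
      rw [Finset.card_insert_of_notMem (Finset.mem_compl.1 hv)]
      omega
    have hcardR : (0:ℝ) < ((Tᶜ : Finset V).card : ℝ) := by rw [hcomplR]; exact hcpos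
    have hmono : (∑ v ∈ Tᶜ, avgOn n (fun S => Real.exp (-t * edens E r n S)) (insert v T))
          / (((Tᶜ : Finset V).card : ℝ))
        ≤ (∑ v ∈ Tᶜ, Real.exp (-t * avgOn n (edens E r n) (insert v T) + k * K))
          / (((Tᶜ : Finset V).card : ℝ)) :=
      (div_le_div_iff_of_pos_right hcardR).2 (Finset.sum_le_sum hstep1)
    refine le_trans hmono ?_
    have hexpand : ∀ v : V, Real.exp (-t * avgOn n (edens E r n) (insert v T) + k * K)
        = Real.exp (k * K) * Real.exp (-t * avgOn n (edens E r n) (insert v T)) := by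
      intro v
      rw [← Real.exp_add]
      ring_nf
    rw [Finset.sum_congr rfl (fun v _ => hexpand v), ← Finset.mul_sum, mul_div_assoc]
    have hy : ∀ u ∈ (Tᶜ : Finset V), ∀ v ∈ (Tᶜ : Finset V),
        (-t * avgOn n (edens E r n) (insert u T)) - (-t * avgOn n (edens E r n) (insert v T))
          ≤ t * c := by
      intro u hu v hv
      have hsw := avgOn_swap E r n hE hr hrn hTn hn hv hu
      have h2 := mul_le_mul_of_nonneg_left hsw ht
      calc (-t * avgOn n (edens E r n) (insert u T))
            - (-t * avgOn n (edens E r n) (insert v T))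
          = t * (avgOn n (edens E r n) (insert v T) - avgOn n (edens E r n) (insert u T)) := by
            ring
        _ ≤ t * c := h2
    have hH := hoeffding_avg Tᶜ hne
      (fun v => -t * avgOn n (edens E r n) (insert v T)) (t * c) hy
    have hsumy : (∑ v ∈ Tᶜ, (-t * avgOn n (edens E r n) (insert v T)))
        = -t * (((N : ℝ) - T.card) * avgOn n (edens E r n) T) := by
      rw [← Finset.mul_sum, recd]
    have h5 : (∑ v ∈ Tᶜ, (-t * avgOn n (edens E r n) (insert v T)))
          / (((Tᶜ : Finset V).card : ℝ)) = -t * avgOn n (edens E r n) T := by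
      rw [hsumy, hcomplR]
      field_simp
    rw [h5] at hH
    calc Real.exp (k * K)
          * ((∑ v ∈ Tᶜ, Real.exp (-t * avgOn n (edens E r n) (insert v T)))
              / (((Tᶜ : Finset V).card : ℝ)))
        ≤ Real.exp (k * K)
            * Real.exp (-t * avgOn n (edens E r n) T + (t * c) ^ 2 / 8) :=
          mul_le_mul_of_nonneg_left hH (Real.exp_pos _).le
      _ = Real.exp (-t * avgOn n (edens E r n) T + (k + 1 : ℕ) * K) := by
          rw [← Real.exp_add]
          congr 1
          have hKc : (t * c) ^ 2 / 8 = K := by rw [hK]; ring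
          rw [hKc]
          push_cast
          ring

end Hyper

private lemma c_val {r n : ℕ} (hr : 1 ≤ r) (hrn : r ≤ n) :
    (((n - 1).choose (r - 1) : ℕ) : ℝ) / (n.choose r : ℝ) = (r : ℝ) / (n : ℝ) := by
  have hkey := Nat.add_one_mul_choose_eq (n - 1) (r - 1)
  have e1 : (n - 1) + 1 = n := by omega
  have e2 : (r - 1) + 1 = r := by omega
  rw [e1, e2] at hkey
  -- hkey : n * (n-1).choose (r-1) = n.choose r * r
  have hn0 : (0:ℝ) < (n : ℝ) := by exact_mod_cast (by omega : 0 < n)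
  have hc0 : (0:ℝ) < (n.choose r : ℝ) := by exact_mod_cast Nat.choose_pos hrn
  have hkeyR : (n : ℝ) * (((n - 1).choose (r - 1) : ℕ) : ℝ) = (n.choose r : ℝ) * (r : ℝ) := by
    exact_mod_cast congrArg (Nat.cast : ℕ → ℝ) hkey
  field_simp
  linarith [hkeyR]

/-- **Concentration of the edge count of a random induced subhypergraph.**
Let `r ≥ 2` and let `H = (V,E)` be an `r`-uniform hypergraph on `N` vertices with edge density
`p = |E|/C(N,r)`. If `S` is a uniformly random `n`-subset of `V` (with `n ≤ N`), then for every
`0 < ε < p` the probability that `e(H[S]) ≤ (p−ε)·C(n,r)` is strictly less than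
`exp(−2ε²(n − 2(r−1))/r²)`. The probability is expressed as the proportion of `n`-subsets. -/
theorem stmt14 (r : ℕ) (hr : 2 ≤ r) (V : Type) [Fintype V] [DecidableEq V]
    (E : Finset (Finset V)) (hE : ∀ e ∈ E, e.card = r)
    (N : ℕ) (hN : Fintype.card V = N)
    (p : ℝ) (hp : p = (E.card : ℝ) / (N.choose r : ℝ))
    (n : ℕ) (hn : n ≤ N) (ε : ℝ) (hε : 0 < ε) (hεp : ε < p) :
    (Nat.card {S : Finset V // S.card = n ∧
        ((E.filter (· ⊆ S)).card : ℝ) ≤ (p - ε) * (n.choose r : ℝ)} : ℝ) /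
        (N.choose n : ℝ) <
      Real.exp (-2 * ε ^ 2 * ((n : ℝ) - 2 * ((r : ℝ) - 1)) / (r : ℝ) ^ 2) := by
  classical
  subst hN
  set N := Fintype.card V with hN
  have hCNn : (0:ℝ) < (N.choose n : ℝ) := by exact_mod_cast Nat.choose_pos hn
  have hr2 : (2:ℝ) ≤ (r : ℝ) := by exact_mod_cast hr
  have hrpos : (0:ℝ) < (r:ℝ) := by linarith
  set Q : Finset V → Prop := fun S => S.card = n ∧
      ((E.filter (· ⊆ S)).card : ℝ) ≤ (p - ε) * (n.choose r : ℝ) with hQ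
  by_cases hcase : r ≤ n
  · -- main case
    have hr1 : 1 ≤ r := by omega
    have hn0 : (0:ℝ) < (n:ℝ) := by
      exact_mod_cast (by omega : 0 < n)
    have hCnr : (0:ℝ) < (n.choose r : ℝ) := by exact_mod_cast Nat.choose_pos hcase
    set t : ℝ := 4 * ε * (n:ℝ) / (r:ℝ)^2 with hts
    have ht : 0 < t := by positivity
    set c : ℝ := (((n - 1).choose (r - 1) : ℕ) : ℝ) / (n.choose r : ℝ) with hc
    have hcrn : c = (r:ℝ)/(n:ℝ) := c_val hr1 hcase
    -- the main bound
    have hmain := main_ind E r n hE hr1 hcase hn t ht.le n le_rfl ∅ (by simp)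
    rw [avgOn_edens_empty E r n hE hcase hn, ← hp] at hmain
    -- identify the Nat.card with a filter card
    set bad : Finset (Finset V) := (extF n (∅ : Finset V)).filter Q with hbad
    have hcard : (Nat.card {S : Finset V // Q S} : ℝ) = (bad.card : ℝ) := by
      norm_cast
      rw [Nat.card_eq_fintype_card, Fintype.card_subtype]
      congr 1
      ext S
      simp only [hbad, Finset.mem_filter, mem_ext, Finset.empty_subset, and_true, hQ,
        Finset.mem_univ, true_and]
      tauto
    -- Markov step
    have hmarkov : (bad.card : ℝ) * Real.exp (-t * (p - ε))
        ≤ ∑ S ∈ extF n (∅ : Finset V), Real.exp (-t * edens E r n S) := by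
      calc (bad.card : ℝ) * Real.exp (-t * (p - ε))
          = ∑ _S ∈ bad, Real.exp (-t * (p - ε)) := by
            rw [Finset.sum_const, nsmul_eq_mul]
        _ ≤ ∑ S ∈ bad, Real.exp (-t * edens E r n S) := by
            apply Finset.sum_le_sum
            intro S hS
            rw [hbad, Finset.mem_filter] at hS
            have hQS := hS.2
            rw [hQ] at hQS
            have hdS : edens E r n S ≤ p - ε := by
              rw [edens, div_le_iff₀ hCnr]
              exact hQS.2
            exact Real.exp_le_exp.2 (by nlinarith)
        _ ≤ ∑ S ∈ extF n (∅ : Finset V), Real.exp (-t * edens E r n S) := by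
            apply Finset.sum_le_sum_of_subset_of_nonneg (Finset.filter_subset _ _)
            intro S _ _
            exact (Real.exp_pos _).le
    -- combine
    have havg : avgOn n (fun S => Real.exp (-t * edens E r n S)) (∅ : Finset V)
        = (∑ S ∈ extF n (∅ : Finset V), Real.exp (-t * edens E r n S)) / (N.choose n : ℝ) := by
      rw [avgOn]
      simp
      rfl
    have hfinal : (bad.card : ℝ) / (N.choose n : ℝ) ≤ Real.exp (-t * ε + n * (t^2 * c^2/8)) := by
      have h1 : (bad.card : ℝ) / (N.choose n : ℝ)
          ≤ Real.exp (t * (p - ε)) * Real.exp (-t * p + n * (t^2 * c^2/8)) := by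
        rw [div_le_iff₀ hCNn]
        have h2 : (bad.card : ℝ) = Real.exp (t * (p - ε))
            * ((bad.card : ℝ) * Real.exp (-t * (p - ε))) := by
          rw [← mul_assoc, mul_comm (Real.exp _), mul_assoc, ← Real.exp_add]
          simp
        rw [h2]
        calc Real.exp (t * (p - ε)) * ((bad.card : ℝ) * Real.exp (-t * (p - ε)))
            ≤ Real.exp (t * (p - ε))
                * (∑ S ∈ extF n (∅ : Finset V), Real.exp (-t * edens E r n S)) :=
              mul_le_mul_of_nonneg_left hmarkov (Real.exp_pos _).le
          _ = Real.exp (t * (p - ε))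
                * (avgOn n (fun S => Real.exp (-t * edens E r n S)) (∅ : Finset V))
                * (N.choose n : ℝ) := by
              rw [havg, mul_assoc, div_mul_cancel₀ _ hCNn.ne']
          _ ≤ Real.exp (t * (p - ε)) * Real.exp (-t * p + n * (t^2 * c^2/8))
                * (N.choose n : ℝ) := by
              apply mul_le_mul_of_nonneg_right _ hCNn.le
              exact mul_le_mul_of_nonneg_left hmain (Real.exp_pos _).le
      rw [← Real.exp_add] at h1
      convert h1 using 2
      ring
    have hexp_eq : -t * ε + n * (t^2 * c^2/8) = -2 * ε^2 * (n:ℝ) / (r:ℝ)^2 := by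
      rw [hcrn, hts]
      field_simp
      ring
    have hlt : -2 * ε^2 * (n:ℝ) / (r:ℝ)^2
        < -2 * ε ^ 2 * ((n : ℝ) - 2 * ((r : ℝ) - 1)) / (r : ℝ) ^ 2 := by
      rw [div_lt_div_iff₀ (by positivity) (by positivity)]
      nlinarith [mul_pos hε hε, sq_nonneg (r:ℝ), mul_pos (mul_pos hε hε) (mul_pos hrpos hrpos)]
    calc (Nat.card {S : Finset V // Q S} : ℝ) / (N.choose n : ℝ)
        = (bad.card : ℝ) / (N.choose n : ℝ) := by rw [hcard]
      _ ≤ Real.exp (-t * ε + n * (t^2 * c^2/8)) := hfinal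
      _ = Real.exp (-2 * ε^2 * (n:ℝ) / (r:ℝ)^2) := by rw [hexp_eq]
      _ < Real.exp (-2 * ε ^ 2 * ((n : ℝ) - 2 * ((r : ℝ) - 1)) / (r : ℝ) ^ 2) :=
          Real.exp_lt_exp.2 hlt
  · -- degenerate case n < r : probability ≤ 1 < RHS
    push_neg at hcase
    have hnr : (n : ℝ) ≤ (r : ℝ) - 1 := by
      have : n + 1 ≤ r := hcase
      have := (Nat.cast_le (α := ℝ)).2 this
      push_cast at this
      linarith
    have hRHS : 1 < Real.exp (-2 * ε ^ 2 * ((n : ℝ) - 2 * ((r : ℝ) - 1)) / (r : ℝ) ^ 2) := by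
      rw [Real.one_lt_exp_iff]
      have hnum : 0 < -2 * ε ^ 2 * ((n : ℝ) - 2 * ((r : ℝ) - 1)) := by nlinarith
      positivity
    have hLHS : (Nat.card {S : Finset V // Q S} : ℝ) / (N.choose n : ℝ) ≤ 1 := by
      rw [div_le_one hCNn]
      have hle : Nat.card {S : Finset V // Q S} ≤ Nat.card {S : Finset V // S.card = n} := by
        apply Nat.card_le_card_of_injective
          (fun x => (⟨x.1, x.2.1⟩ : {S : Finset V // S.card = n}))
        intro x y hxy
        have h2 := congrArg (fun z : {S : Finset V // S.card = n} => z.val) hxy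
        exact Subtype.ext h2
      have heq : Nat.card {S : Finset V // S.card = n} = N.choose n := by
        rw [Nat.card_eq_fintype_card, Fintype.card_finset_len]
      exact_mod_cast le_trans hle (le_of_eq heq)
    exact lt_of_le_of_lt hLHS hRHS
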